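/- For the Weyl polynomials, i.e., for the basis functions f_j(z) = z^j / √(j!), the real-zero intensity g_n(x) = √(A_2(x) A_0(x) − A_1(x)²) / (π B_0(x)) converges, for every fixed real x, to 1/π as n → ∞. -/

import Mathlib

open Finset Filter Topology

/-- **(Vanderbei, Weyl polynomials.)** For the basis `f_j(x) = x^j/√(j!)`, the real-zero
intensity `g_n(x) = √(A₂A₀ − A₁²)/(π B₀)` tends to `1/π` as `n → ∞`, for every real `x`. -/
theorem weyl_real_intensity_tendsto
    (f : ℕ → ℝ → ℝ)
    (hf : ∀ j x, f j x = x ^ j / Real.sqrt (Nat.factorial j))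
    (A0 A1 A2 B0 : ℕ → ℝ → ℝ) (g : ℕ → ℝ → ℝ)
    (hA0 : ∀ n x, A0 n x = ∑ j ∈ Finset.range (n + 1), (f j x) ^ 2)
    (hA1 : ∀ n x, A1 n x = ∑ j ∈ Finset.range (n + 1), f j x * deriv (f j) x)
    (hA2 : ∀ n x, A2 n x = ∑ j ∈ Finset.range (n + 1), (deriv (f j) x) ^ 2)
    (hB0 : ∀ n x, B0 n x = ∑ j ∈ Finset.range (n + 1), |f j x| ^ 2)
    (hg : ∀ n x, g n x = Real.sqrt (A2 n x * A0 n x - (A1 n x) ^ 2) / (Real.pi * B0 n x))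
    (x : ℝ) :
    Tendsto (fun n => g n x) atTop (𝓝 (1 / Real.pi)) := by
  -- basic facts
  have hfact : ∀ j : ℕ, (0 : ℝ) < (Nat.factorial j : ℝ) := fun j => by
    exact_mod_cast Nat.factorial_pos j
  have hsq : ∀ j : ℕ, Real.sqrt (Nat.factorial j) * Real.sqrt (Nat.factorial j)
      = (Nat.factorial j : ℝ) := fun j => Real.mul_self_sqrt (le_of_lt (hfact j))
  have hfsucc : ∀ i : ℕ, ((Nat.factorial (i + 1) : ℝ)) = ((i : ℝ) + 1) * (Nat.factorial i : ℝ) := by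
    intro i; rw [Nat.factorial_succ]; push_cast; ring
  -- derivative of f j
  have hderiv : ∀ j, deriv (f j) x = (j : ℝ) * x ^ (j - 1) / Real.sqrt (Nat.factorial j) := by
    intro j
    have hfj : f j = fun y => y ^ j / Real.sqrt (Nat.factorial j) := funext (hf j)
    rw [hfj, deriv_div_const, deriv_pow_field]
  -- the basic sequence
  set E : ℝ := Real.exp (x ^ 2) with hE
  set P : ℕ → ℝ := fun n => ∑ i ∈ Finset.range n, x ^ (2 * i) / (Nat.factorial i : ℝ) with hPdef
  have hEpos : 0 < E := Real.exp_pos _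
  have hP : Tendsto P atTop (𝓝 E) := by
    have h1 : HasSum (fun n : ℕ => (x ^ 2) ^ n / (Nat.factorial n : ℝ))
        (NormedSpace.exp (x ^ 2)) := NormedSpace.expSeries_div_hasSum_exp (x ^ 2)
    have h2 := h1.tendsto_sum_nat
    rw [hE, Real.exp_eq_exp_ℝ]
    convert h2 using 2 with n
    refine Finset.sum_congr rfl fun i _ => ?_
    rw [pow_mul]
  -- termwise identities
  have term0 : ∀ j, (f j x) ^ 2 = x ^ (2 * j) / (Nat.factorial j : ℝ) := by
    intro j
    rw [hf, div_pow, ← pow_mul, mul_comm j 2, Real.sq_sqrt (le_of_lt (hfact j))]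
  have hA0' : ∀ n, A0 n x = P (n + 1) := by
    intro n; rw [hA0]; exact Finset.sum_congr rfl fun j _ => term0 j
  have hB0' : ∀ n, B0 n x = P (n + 1) := by
    intro n; rw [hB0]
    refine Finset.sum_congr rfl fun j _ => ?_
    rw [sq_abs]; exact term0 j
  -- A1
  have term1 : ∀ i : ℕ, f (i + 1) x * deriv (f (i + 1)) x
      = x * (x ^ (2 * i) / (Nat.factorial i : ℝ)) := by
    intro i
    rw [hf, hderiv]
    have hi : (Nat.factorial i : ℝ) ≠ 0 := ne_of_gt (hfact i)
    have hi1 : ((i : ℝ) + 1) ≠ 0 := by positivity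
    rw [div_mul_div_comm, hsq, Nat.add_sub_cancel, hfsucc]
    push_cast
    rw [div_eq_iff (by positivity)]
    have hxp : x ^ (i + 1) * (((i : ℝ) + 1) * x ^ i) = ((i : ℝ) + 1) * x ^ (2 * i + 1) := by
      have h21 : 2 * i + 1 = (i + 1) + i := by ring
      rw [h21, pow_add]; ring
    rw [hxp]
    have hxp2 : x * (x ^ (2 * i) / (Nat.factorial i : ℝ)) * (((i : ℝ) + 1) * (Nat.factorial i : ℝ))
        = ((i : ℝ) + 1) * (x * x ^ (2 * i)) := by field_simp
    rw [hxp2, pow_succ]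
    ring
  have hA1' : ∀ n, A1 n x = x * P n := by
    intro n
    rw [hA1, Finset.sum_range_succ']
    have h0 : f 0 x * deriv (f 0) x = 0 := by rw [hderiv]; simp
    rw [h0, add_zero, Finset.mul_sum]
    exact Finset.sum_congr rfl fun i _ => term1 i
  -- A2
  have term2 : ∀ i : ℕ, (deriv (f (i + 1)) x) ^ 2
      = x ^ (2 * i) / (Nat.factorial i : ℝ)
        + (i : ℝ) * (x ^ (2 * i) / (Nat.factorial i : ℝ)) := by
    intro i
    rw [hderiv, div_pow, Real.sq_sqrt (le_of_lt (hfact (i + 1))), Nat.add_sub_cancel, hfsucc]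
    have hi : (Nat.factorial i : ℝ) ≠ 0 := ne_of_gt (hfact i)
    have hi1 : ((i : ℝ) + 1) ≠ 0 := by positivity
    rw [mul_pow]
    push_cast
    have hxp : (x ^ i) ^ 2 = x ^ (2 * i) := by rw [← pow_mul, mul_comm]
    rw [hxp]
    field_simp
    ring
  have term3 : ∀ i : ℕ, ((i : ℝ) + 1) * (x ^ (2 * (i + 1)) / (Nat.factorial (i + 1) : ℝ))
      = x ^ 2 * (x ^ (2 * i) / (Nat.factorial i : ℝ)) := by
    intro i
    have hi : (Nat.factorial i : ℝ) ≠ 0 := ne_of_gt (hfact i)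
    have hi1 : ((i : ℝ) + 1) ≠ 0 := by positivity
    rw [hfsucc]
    have hxp : x ^ (2 * (i + 1)) = x ^ (2 * i) * x ^ 2 := by
      have : 2 * (i + 1) = 2 * i + 2 := by ring
      rw [this, pow_add]
    rw [hxp]
    field_simp
  have hshift : ∀ n : ℕ,
      (∑ i ∈ Finset.range n, (i : ℝ) * (x ^ (2 * i) / (Nat.factorial i : ℝ)))
        = x ^ 2 * P (n - 1) := by
    intro n
    cases n with
    | zero => simp [hPdef]
    | succ m =>
      rw [Finset.sum_range_succ']
      simp only [Nat.cast_zero, zero_mul, add_zero, Nat.add_sub_cancel]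
      rw [Finset.mul_sum]
      refine Finset.sum_congr rfl fun i _ => ?_
      push_cast
      exact term3 i
  have hA2' : ∀ n, A2 n x = P n + x ^ 2 * P (n - 1) := by
    intro n
    rw [hA2, Finset.sum_range_succ']
    have h0 : (deriv (f 0) x) ^ 2 = 0 := by rw [hderiv]; simp
    rw [h0, add_zero]
    have : (∑ i ∈ Finset.range n, (deriv (f (i + 1)) x) ^ 2)
        = ∑ i ∈ Finset.range n, (x ^ (2 * i) / (Nat.factorial i : ℝ)
            + (i : ℝ) * (x ^ (2 * i) / (Nat.factorial i : ℝ))) :=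
      Finset.sum_congr rfl fun i _ => term2 i
    rw [this, Finset.sum_add_distrib, hshift]
  -- rewrite g
  have hg' : ∀ n, g n x
      = Real.sqrt ((P n + x ^ 2 * P (n - 1)) * P (n + 1) - x ^ 2 * (P n) ^ 2)
        / (Real.pi * P (n + 1)) := by
    intro n
    rw [hg, hA0', hA1', hA2', hB0']
    congr 2
    ring
  -- limits
  have hP1 : Tendsto (fun n => P (n + 1)) atTop (𝓝 E) :=
    hP.comp (tendsto_add_atTop_nat 1)
  have hPm : Tendsto (fun n => P (n - 1)) atTop (𝓝 E) :=
    hP.comp (tendsto_sub_atTop_nat 1)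
  have hQ : Tendsto (fun n => (P n + x ^ 2 * P (n - 1)) * P (n + 1) - x ^ 2 * (P n) ^ 2)
      atTop (𝓝 (E ^ 2)) := by
    have h := ((hP.add ((tendsto_const_nhds (x := x ^ 2)).mul hPm)).mul hP1).sub
      ((tendsto_const_nhds (x := x ^ 2)).mul (hP.pow 2))
    have heq : (E + x ^ 2 * E) * E - x ^ 2 * E ^ 2 = E ^ 2 := by ring
    rwa [heq] at h
  have hsqrt : Tendsto (fun n => Real.sqrt ((P n + x ^ 2 * P (n - 1)) * P (n + 1)
      - x ^ 2 * (P n) ^ 2)) atTop (𝓝 E) := by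
    have h := (Real.continuous_sqrt.tendsto (E ^ 2)).comp hQ
    rwa [Real.sqrt_sq hEpos.le] at h
  have hden : Tendsto (fun n => Real.pi * P (n + 1)) atTop (𝓝 (Real.pi * E)) :=
    tendsto_const_nhds.mul hP1
  have hne : Real.pi * E ≠ 0 := by positivity
  have hfinal := hsqrt.div hden hne
  have hlim : E / (Real.pi * E) = 1 / Real.pi := by
    field_simp
  rw [hlim] at hfinal
  exact hfinal.congr fun n => (hg' n).symm
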